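/- Let n ≥ 1 be an integer, s > 0 a real number, φ*_k = √(2/(n+2))·sin((k+1)π/(n+2)), ρ* = φ*(φ*)ᵀ, and let M be the (n+1)×(n+1) matrix with entries M_{k,k'} = sinc((k−k')π/(s+1))/(s+1), where sinc(x) = sin(x)/x for x ≠ 0 and sinc(0) = 1. Assume that I − M is positive semidefinite. Then the matrix τ := ((s+1)/s)·((I − M) ∘ ρ*), where ∘ denotes the entrywise (Hadamard) product, is positive semidefinite with trace 1, and ρ̃(s) + s·τ is a diagonal matrix, where ρ̃(s)_{k,k'} = φ*_k φ*_{k'}·sinc((k−k')π/(s+1)). Consequently the robustness of coherence of ρ̃(s) is at most s. -/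

import Mathlib

open Real Matrix

/-- `sinc x = sin x / x` with `sinc 0 = 1`. -/
noncomputable def sinc (x : ℝ) : ℝ := if x = 0 then 1 else Real.sin x / x

/-- The optimal pure probe state `φ*_k = √(2/(n+2))·sin((k+1)π/(n+2))`. -/
noncomputable def φstar (n : ℕ) : Fin (n+1) → ℝ := fun k =>
  Real.sqrt (2 / ((n : ℝ) + 2)) * Real.sin (((k : ℝ) + 1) * π / (n + 2))

/-- The discrete Dyson (sinc) kernel `M_{k,k'} = sinc((k−k')π/(s+1))/(s+1)`. -/
noncomputable def dysonM (n : ℕ) (s : ℝ) : Matrix (Fin (n+1)) (Fin (n+1)) ℝ :=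
  Matrix.of fun k k' => _root_.sinc (((k : ℝ) - (k' : ℝ)) * π / (s + 1)) / (s + 1)

/-- The twirled probe state `ρ̃(s)_{k,k'} = φ*_k φ*_{k'} sinc((k−k')π/(s+1))`. -/
noncomputable def ρtwirl (n : ℕ) (s : ℝ) : Matrix (Fin (n+1)) (Fin (n+1)) ℝ :=
  Matrix.of fun k k' =>
    φstar n k * φstar n k' * _root_.sinc (((k : ℝ) - (k' : ℝ)) * π / (s + 1))

/-- The robustness of coherence of `ρ` (with respect to the computational
basis): the least `s ≥ 0` such that `ρ + sτ` is diagonal for some state `τ`. -/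
noncomputable def RoC {d : ℕ} (ρ : Matrix (Fin d) (Fin d) ℝ) : ℝ :=
  sInf {s : ℝ | 0 ≤ s ∧ ∃ τ : Matrix (Fin d) (Fin d) ℝ,
    τ.PosSemidef ∧ τ.trace = 1 ∧ ∀ i j, i ≠ j → (ρ + s • τ) i j = 0}

lemma sinc_zero : _root_.sinc 0 = 1 := if_pos rfl

lemma cos_sum_aux (n : ℕ) (hn : 1 ≤ n) :
    ∑ k ∈ Finset.range (n+1), Real.cos (((k : ℝ)+1) * (2*π/((n:ℝ)+2))) = -1 := by
  set θ : ℝ := 2*π/((n:ℝ)+2) with hθ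
  have hn2 : ((n:ℝ)+2) ≠ 0 := by positivity
  have hθpos : 0 < θ := by
    rw [hθ]; positivity
  have hθlt : θ < π := by
    rw [hθ, div_lt_iff₀ (by positivity)]
    have : (3:ℝ) ≤ (n:ℝ)+2 := by
      have : (1:ℝ) ≤ (n:ℝ) := by exact_mod_cast hn
      linarith
    nlinarith [Real.pi_pos]
  set z : ℂ := Complex.exp (θ * Complex.I) with hz
  have hzne : z ≠ 1 := by
    intro h
    have him : z.im = Real.sin θ := Complex.exp_ofReal_mul_I_im θ
    have : Real.sin θ > 0 := Real.sin_pos_of_pos_of_lt_pi hθpos hθlt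
    rw [h] at him
    simp at him
    linarith
  have hzpow : z ^ (n+2) = 1 := by
    rw [hz, ← Complex.exp_nat_mul]
    have : ((n:ℂ)+2) * ((θ:ℂ) * Complex.I) = 2*π*Complex.I := by
      have h1 : ((n:ℂ)+2) * (θ:ℂ) = 2*(π:ℂ) := by
        have : ((n:ℝ)+2) * θ = 2*π := by
          rw [hθ]; field_simp
        calc ((n:ℂ)+2) * (θ:ℂ) = ((((n:ℝ)+2) * θ : ℝ) : ℂ) := by push_cast; ring
          _ = ((2*π : ℝ) : ℂ) := by rw [this]
          _ = 2*(π:ℂ) := by push_cast; ring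
      calc ((n:ℂ)+2) * ((θ:ℂ) * Complex.I) = (((n:ℂ)+2) * (θ:ℂ)) * Complex.I := by ring
        _ = 2*π*Complex.I := by rw [h1]
    push_cast
    rw [this, Complex.exp_two_pi_mul_I]
  have hsum : ∑ i ∈ Finset.range (n+2), z ^ i = 0 := by
    rw [geom_sum_eq hzne, hzpow, sub_self, zero_div]
  have hsum' : ∑ i ∈ Finset.range (n+1), z ^ (i+1) = -1 := by
    have h := Finset.sum_range_succ' (fun i => z ^ i) (n+1)
    rw [hsum] at h
    simp at h
    linear_combination -h
  have hre : ∀ i : ℕ, (z ^ (i+1)).re = Real.cos (((i:ℝ)+1) * θ) := by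
    intro i
    rw [hz, ← Complex.exp_nat_mul]
    have : ((i:ℕ)+1 : ℂ) * ((θ:ℂ) * Complex.I) = ((((i:ℝ)+1) * θ : ℝ) : ℂ) * Complex.I := by
      push_cast; ring
    push_cast
    rw [this, Complex.exp_ofReal_mul_I_re]
  calc ∑ k ∈ Finset.range (n+1), Real.cos (((k : ℝ)+1) * θ)
      = ∑ k ∈ Finset.range (n+1), (z ^ (k+1)).re := by
        exact Finset.sum_congr rfl fun k _ => (hre k).symm
    _ = (∑ k ∈ Finset.range (n+1), z ^ (k+1)).re := by
        rw [Complex.re_sum]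
    _ = -1 := by rw [hsum']; simp

lemma sum_phi_sq (n : ℕ) (hn : 1 ≤ n) : ∑ k : Fin (n+1), (φstar n k)^2 = 1 := by
  have hn2 : (0:ℝ) < (n:ℝ)+2 := by positivity
  have h1 : ∀ k : Fin (n+1), (φstar n k)^2
      = (2/((n:ℝ)+2)) * (Real.sin (((k : ℝ) + 1) * π / (n + 2)))^2 := by
    intro k
    rw [φstar, mul_pow, Real.sq_sqrt (by positivity)]
  have h2 : ∀ x : ℝ, (Real.sin x)^2 = 1/2 - Real.cos (2*x)/2 := fun x =>
    Real.sin_sq_eq_half_sub x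
  have h3 : ∑ k : Fin (n+1), (Real.sin (((k : ℝ) + 1) * π / (n + 2)))^2 = ((n:ℝ)+2)/2 := by
    have : ∀ k : Fin (n+1), (Real.sin (((k : ℝ) + 1) * π / (n + 2)))^2
        = 1/2 - Real.cos (((k:ℝ)+1) * (2*π/((n:ℝ)+2)))/2 := by
      intro k
      rw [h2]
      congr 2
      field_simp
    rw [Finset.sum_congr rfl fun k _ => this k, Finset.sum_sub_distrib]
    have hcos : ∑ k : Fin (n+1), Real.cos (((k:ℝ)+1) * (2*π/((n:ℝ)+2)))/2
        = (∑ k ∈ Finset.range (n+1), Real.cos (((k:ℝ)+1) * (2*π/((n:ℝ)+2))))/2 := by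
      rw [Finset.sum_div]
      exact Fin.sum_univ_eq_sum_range
        (fun i => Real.cos (((i:ℝ)+1) * (2*π/((n:ℝ)+2)))/2) (n+1)
    rw [hcos, cos_sum_aux n hn]
    simp [Finset.card_univ]
    -- cast done
    ring
  rw [Finset.sum_congr rfl fun k _ => h1 k, ← Finset.mul_sum, h3]
  field_simp

lemma sinc_even (x : ℝ) : _root_.sinc (-x) = _root_.sinc x := by
  unfold _root_.sinc
  rcases eq_or_ne x 0 with h | h
  · simp [h]
  · rw [if_neg (neg_ne_zero.mpr h), if_neg h, Real.sin_neg]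
    field_simp

/-- If `I − M ⪰ 0`, then `τ = ((s+1)/s)·(I−M)∘ρ*` is a state such that
`ρ̃(s) + sτ` is diagonal; consequently `𝒞_R(ρ̃(s)) ≤ s`. -/
theorem twirled_state_coherence_bound (n : ℕ) (hn : 1 ≤ n) (s : ℝ) (hs : 0 < s)
    (hM : ((1 : Matrix (Fin (n+1)) (Fin (n+1)) ℝ) - dysonM n s).PosSemidef)
    (τ : Matrix (Fin (n+1)) (Fin (n+1)) ℝ)
    (hτdef : τ = ((s + 1) / s) •
      Matrix.hadamard ((1 : Matrix (Fin (n+1)) (Fin (n+1)) ℝ) - dysonM n s)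
        (vecMulVec (φstar n) (φstar n))) :
    τ.PosSemidef ∧ τ.trace = 1 ∧
      (∀ i j, i ≠ j → (ρtwirl n s + s • τ) i j = 0) ∧
      RoC (ρtwirl n s) ≤ s := by
  have hs1 : (0:ℝ) < s + 1 := by linarith
  have hse : s ≠ 0 := ne_of_gt hs
  have hs1e : s + 1 ≠ 0 := ne_of_gt hs1
  have hc : (0:ℝ) ≤ (s+1)/s := by positivity
  -- PSD
  have hpsd : τ.PosSemidef := by
    refine Matrix.PosSemidef.of_dotProduct_mulVec_nonneg ?_ ?_
    · -- Hermitian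
      rw [hτdef]
      ext i j
      simp only [conjTranspose_apply, Matrix.smul_apply, hadamard_apply, vecMulVec_apply,
        smul_eq_mul, star_trivial, Matrix.sub_apply, one_apply, dysonM, of_apply]
      have hsy : _root_.sinc (((j : ℝ) - (i : ℝ)) * π / (s + 1))
          = _root_.sinc (((i : ℝ) - (j : ℝ)) * π / (s + 1)) := by
        rw [show ((j : ℝ) - (i : ℝ)) * π / (s + 1)
          = -(((i : ℝ) - (j : ℝ)) * π / (s + 1)) by ring, sinc_even]
      rw [hsy]
      rcases eq_or_ne i j with h | h
      · subst h; ring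
      · rw [if_neg h, if_neg (Ne.symm h)]; ring
    · intro x
      have key : star x ⬝ᵥ (τ *ᵥ x)
          = ((s+1)/s) * (star (x * φstar n) ⬝ᵥ
            (((1 : Matrix (Fin (n+1)) (Fin (n+1)) ℝ) - dysonM n s) *ᵥ (x * φstar n))) := by
        simp only [star_trivial, dotProduct, mulVec, hτdef, Matrix.smul_apply, hadamard_apply,
          vecMulVec_apply, smul_eq_mul, Pi.mul_apply]
        rw [Finset.mul_sum]
        refine Finset.sum_congr rfl fun i _ => ?_
        rw [Finset.mul_sum, Finset.mul_sum, Finset.mul_sum]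
        refine Finset.sum_congr rfl fun j _ => ?_
        ring
      rw [key]
      exact mul_nonneg hc (hM.dotProduct_mulVec_nonneg (x * φstar n))
  -- trace
  have htr : τ.trace = 1 := by
    rw [trace]
    have hdiag : ∀ k : Fin (n+1), τ.diag k = (φstar n k)^2 := by
      intro k
      simp only [diag, hτdef, Matrix.smul_apply, hadamard_apply, vecMulVec_apply, smul_eq_mul,
        Matrix.sub_apply, one_apply_eq, dysonM, of_apply, sub_self, zero_mul, zero_div, _root_.sinc_zero]
      field_simp
      ring
    rw [Finset.sum_congr rfl fun k _ => hdiag k]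
    exact sum_phi_sq n hn
  -- off-diagonal
  have hoff : ∀ i j, i ≠ j → (ρtwirl n s + s • τ) i j = 0 := by
    intro i j hij
    simp only [Matrix.add_apply, Matrix.smul_apply, hτdef, hadamard_apply, vecMulVec_apply,
      smul_eq_mul, Matrix.sub_apply, one_apply_ne hij, dysonM, of_apply, ρtwirl]
    generalize _root_.sinc (((i : ℝ) - (j : ℝ)) * π / (s + 1)) = c
    field_simp
    ring
  refine ⟨hpsd, htr, hoff, ?_⟩
  apply csInf_le
  · exact ⟨0, fun x hx => hx.1⟩
  · exact ⟨hs.le, τ, hpsd, htr, hoff⟩
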